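/- Let G be a group admitting an H-filtration {G_α} for a central subgroup H ≤ G. Then the amalgamated free product G *_H G (two copies of G amalgamated over H via the identity map) is residually finite. -/

import Mathlib

/-- A group is residually finite if every nontrivial element is avoided by some
finite-index normal subgroup. -/
def ResiduallyFinite (G : Type*) [Group G] : Prop :=
  ∀ g : G, g ≠ 1 → ∃ N : Subgroup G, N.Normal ∧ N.FiniteIndex ∧ g ∉ N

/-- The two-element family of groups `{G₁, G₂}`, used to form the amalgamated free
product `G₁ *_H G₂` as `Monoid.PushoutI`. -/
def fam (G₁ G₂ : Type u) : Bool → Type u := fun b => cond b G₁ G₂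

instance famGroup (G₁ G₂ : Type u) [Group G₁] [Group G₂] : ∀ b, Group (fam G₁ G₂ b)
  | true => inferInstanceAs (Group G₁)
  | false => inferInstanceAs (Group G₂)

/-- The pair of embeddings of the amalgamated subgroup into the two factors. -/
def famHom {H : Type*} {G₁ G₂ : Type u} [Group H] [Group G₁] [Group G₂]
    (f₁ : H →* G₁) (f₂ : H →* G₂) : ∀ b, H →* fam G₁ G₂ b
  | true => f₁
  | false => f₂

open Monoid Monoid.CoprodI

namespace St17Aux

set_option linter.unusedSectionVars false

variable {ι : Type*} [DecidableEq ι] {M : ι → Type*} [∀ i, Group (M i)]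
  [∀ i, DecidableEq (M i)]

/-- words of length at most `n`. -/
abbrev Trunc (M : ι → Type*) [∀ i, Group (M i)] (n : ℕ) : Type _ :=
  {w : Word M // w.toList.length ≤ n}

lemma length_rcons {i : ι} (p : Word.Pair M i) :
    (Word.rcons p).toList.length =
      (if p.head = 1 then 0 else 1) + p.tail.toList.length := by
  rw [Word.rcons]
  split <;> simp [Word.cons, Nat.add_comm]

lemma fstIdx_rcons {i : ι} (p : Word.Pair M i) :
    (Word.rcons p).fstIdx = if p.head = 1 then p.tail.fstIdx else some i := by
  rw [Word.rcons]
  split <;> simp [Word.cons, Word.fstIdx]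

/-- the compatibility predicate: a word of length `< n`, or starting with index `i`. -/
def Ok (n : ℕ) (i : ι) (w : Word M) : Prop :=
  w.toList.length < n ∨ w.fstIdx = some i

instance (n : ℕ) (i : ι) (w : Word M) : Decidable (Ok n i w) := by
  unfold Ok; infer_instance

lemma trunc_step {n : ℕ} {i : ι} (m : M i) {w : Word M}
    (hw : w.toList.length ≤ n) (hP : Ok n i w) :
    (of m • w).toList.length ≤ n ∧ Ok n i (of m • w) := by
  set p := Word.equivPair i w with hp
  have hw_eq : w = Word.rcons p := by
    rw [hp, ← Word.equivPair_symm, Equiv.symm_apply_apply]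
  have hlen_w : w.toList.length = (if p.head = 1 then 0 else 1) + p.tail.toList.length := by
    conv_lhs => rw [hw_eq]
    exact length_rcons p
  have hsmul : of m • w = Word.rcons ⟨m * p.head, p.tail, p.fstIdx_ne⟩ := by
    rw [Word.of_smul_def]
  have hlen_s : (of m • w).toList.length =
      (if m * p.head = 1 then 0 else 1) + p.tail.toList.length := by
    rw [hsmul]; exact length_rcons _
  have hfst_s : (of m • w).fstIdx =
      if m * p.head = 1 then p.tail.fstIdx else some i := by
    rw [hsmul]; exact fstIdx_rcons _
  have htail_lt : p.tail.toList.length < n := by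
    rcases hP with hP | hP
    · have : p.tail.toList.length ≤ w.toList.length := by omega
      omega
    · -- fstIdx w = some i forces p.head ≠ 1
      have hhead : p.head ≠ 1 := by
        intro h1
        have : w.fstIdx = p.tail.fstIdx := by
          conv_lhs => rw [hw_eq]
          rw [fstIdx_rcons, if_pos h1]
        exact p.fstIdx_ne (by rw [← this, hP])
      rw [if_neg hhead] at hlen_w
      omega
  by_cases hm : m * p.head = 1
  · rw [if_pos hm] at hlen_s
    constructor
    · omega
    · left; omega
  · rw [if_neg hm] at hlen_s
    constructor
    · omega
    · right; rw [hfst_s, if_neg hm]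

/-- truncated multiplication on words of length at most `n`. -/
def truncMul (n : ℕ) (i : ι) (m : M i) (w : Trunc M n) : Trunc M n :=
  if h : Ok n i w.1 then ⟨of m • w.1, (trunc_step m w.2 h).1⟩ else w

lemma truncMul_one (n : ℕ) (i : ι) (w : Trunc M n) : truncMul n i 1 w = w := by
  unfold truncMul
  split
  · exact Subtype.ext (show of (1 : M i) • w.1 = w.1 by rw [map_one, one_smul])
  · rfl

lemma truncMul_mul (n : ℕ) (i : ι) (m m' : M i) (w : Trunc M n) :
    truncMul n i (m * m') w = truncMul n i m (truncMul n i m' w) := by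
  unfold truncMul
  by_cases h : Ok n i w.1
  · rw [dif_pos h]
    have h2 := (trunc_step m' w.2 h).2
    rw [dif_pos h, dif_pos h2]
    exact Subtype.ext (show of (m * m') • w.1 = of m • (of m' • w.1) by
      rw [map_mul, mul_smul])
  · rw [dif_neg h, dif_neg h, dif_neg h]

/-- truncated multiplication as a permutation. -/
def truncPerm (n : ℕ) (i : ι) (m : M i) : Equiv.Perm (Trunc M n) where
  toFun := truncMul n i m
  invFun := truncMul n i m⁻¹
  left_inv w := by rw [← truncMul_mul, inv_mul_cancel, truncMul_one]
  right_inv w := by rw [← truncMul_mul, mul_inv_cancel, truncMul_one]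

/-- the homomorphism `M i →* Perm (Trunc M n)`. -/
def truncHom (n : ℕ) (i : ι) : M i →* Equiv.Perm (Trunc M n) where
  toFun := truncPerm n i
  map_one' := Equiv.ext fun w => truncMul_one n i w
  map_mul' m m' := Equiv.ext fun w => truncMul_mul n i m m' w

/-- the homomorphism from the free product to the truncated permutation group. -/
def truncTheta (n : ℕ) : CoprodI M →* Equiv.Perm (Trunc M n) :=
  CoprodI.lift (truncHom n)

lemma emptyLe (n : ℕ) : (Word.empty : Word M).toList.length ≤ n := by
  simp [Word.empty]

lemma truncTheta_eval (n : ℕ) (w : Word M) (hw : w.toList.length ≤ n) :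
    truncTheta n w.prod ⟨Word.empty, emptyLe n⟩ = ⟨w, hw⟩ := by
  induction w using Word.consRecOn with
  | empty => rw [Word.prod_empty, map_one]; rfl
  | cons i m w h1 h2 ih =>
    have hlc : (Word.cons m w h1 h2).toList.length = w.toList.length + 1 := by
      simp [Word.cons]
    have hwle : w.toList.length ≤ n := by omega
    rw [Word.prod_cons, map_mul]
    have : truncTheta n (of m) = truncHom n i m := CoprodI.lift_of _ _
    rw [Equiv.Perm.mul_apply, ih hwle, this]
    show truncMul n i m ⟨w, hwle⟩ = _
    have hok : Ok n i w := Or.inl (by omega)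
    rw [truncMul, dif_pos hok]
    exact Subtype.ext (Word.cons_eq_smul (m := m) (ls := w) (h1 := h1) (h2 := h2)).symm

lemma truncTheta_ne_one {w : Word M} (hw : w ≠ Word.empty) :
    truncTheta w.toList.length w.prod ≠ 1 := by
  intro h
  have := truncTheta_eval w.toList.length w le_rfl
  rw [h] at this
  simp only [Equiv.Perm.coe_one, id_eq] at this
  exact hw (congrArg Subtype.val this).symm

instance truncFinite (n : ℕ) [Finite ι] [∀ i, Finite (M i)] : Finite (Trunc M n) := by
  have : Finite {l : List (Σ i, M i) // l.length ≤ n} :=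
    (List.finite_length_le (Σ i, M i) n).to_subtype
  exact Finite.of_injective
    (fun w : Trunc M n => (⟨w.1.toList, w.2⟩ : {l : List (Σ i, M i) // l.length ≤ n}))
    (fun w₁ w₂ h => Subtype.ext (Word.ext (congrArg Subtype.val h)))


section MapWord

variable {N : ι → Type*} [∀ i, Group (N i)]

/-- Map a word along a family of homomorphisms, assuming no letter dies. -/
def mapWord (f : ∀ i, M i →* N i) (w : Word M)
    (hf : ∀ l ∈ w.toList, f l.1 l.2 ≠ 1) : Word N where
  toList := w.toList.map (fun l => ⟨l.1, f l.1 l.2⟩)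
  ne_one := by
    intro l hl
    simp only [List.mem_map] at hl
    obtain ⟨l', hl', rfl⟩ := hl
    exact hf l' hl'
  chain_ne := by
    refine List.isChain_map_of_isChain _ ?_ w.chain_ne
    intro a b h
    exact h

lemma mapWord_prod (f : ∀ i, M i →* N i) (w : Word M)
    (hf : ∀ l ∈ w.toList, f l.1 l.2 ≠ 1) :
    (mapWord f w hf).prod =
      CoprodI.lift (fun i => (CoprodI.of (M := N)).comp (f i)) w.prod := by
  rw [Word.prod, Word.prod, mapWord, map_list_prod, List.map_map, List.map_map]
  refine congrArg List.prod (List.map_congr_left ?_)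
  intro l _
  simp only [Function.comp_apply, CoprodI.lift_of, MonoidHom.coe_comp]

lemma mapWord_length (f : ∀ i, M i →* N i) (w : Word M)
    (hf : ∀ l ∈ w.toList, f l.1 l.2 ≠ 1) :
    (mapWord f w hf).toList.length = w.toList.length := by
  simp [mapWord]

end MapWord

end St17Aux


/-- a (classical) decidable equality on the two copies. -/
noncomputable instance famDecEq (G₁ G₂ : Type u) : ∀ b, DecidableEq (fam G₁ G₂ b) :=
  fun _ => Classical.decEq _

/-- the identity homomorphisms out of the two copies of `G`. -/
def famId (G : Type u) [Group G] : ∀ b, fam G G b →* G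
  | true => MonoidHom.id G
  | false => MonoidHom.id G

open St17Aux Monoid.PushoutI

/-- if `H ≤ G` is a central subgroup and `G` admits an `H`-filtration
(a family of finite-index normal subgroups `G α` with trivial intersection and
`⋂ α, H·G α = H`), then the amalgamated free product `G *_H G` of two copies of `G`
over `H` (via the identity map) is residually finite. -/
theorem statement17 {G : Type u} [Group G] (H : Subgroup G)
    (hcent : H ≤ Subgroup.center G)
    {ι : Type*} (Gα : ι → Subgroup G)
    (hnorm : ∀ α, (Gα α).Normal) (hfi : ∀ α, (Gα α).FiniteIndex)
    (htriv : ⨅ α, Gα α = ⊥) (hfil : ⨅ α, (H ⊔ Gα α) = H) :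
    ResiduallyFinite (Monoid.PushoutI (G := fam G G) (famHom H.subtype H.subtype)) := by
  classical
  set φ : ∀ b : Bool, ↥H →* fam G G b := famHom H.subtype H.subtype with hφdef
  intro x hx
  have hφ : ∀ b, Function.Injective (φ b) := by
    intro b
    cases b <;> exact fun a b h => Subtype.ext congr(($h : G))
  obtain ⟨d⟩ := Monoid.PushoutI.NormalWord.transversal_nonempty φ hφ
  obtain ⟨w, hxw⟩ : ∃ w : NormalWord d, x = w.prod :=
    ⟨x • (NormalWord.empty : NormalWord d), by
      rw [NormalWord.prod_smul, NormalWord.prod_empty, mul_one]⟩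
  have hprod : w.prod = Monoid.PushoutI.base φ w.head
      * Monoid.PushoutI.ofCoprodI w.toWord.prod := rfl
  have hHnormal : H.Normal := by
    constructor
    intro h hh g
    have hc : g * h * g⁻¹ = h := by
      rw [Subgroup.mem_center_iff.1 (hcent hh) g, mul_assoc, mul_inv_cancel, mul_one]
    rwa [hc]
  by_cases hempty : w.toWord.toList = []
  · -- `x` is in the image of the base group
    have hW1 : w.toWord.prod = 1 := by
      rw [Monoid.CoprodI.Word.prod, hempty]
      simp
    have hx_base : x = Monoid.PushoutI.base φ w.head := by
      rw [hxw, hprod, hW1, map_one, mul_one]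
    have hhead : (w.head : G) ≠ 1 := by
      intro h1
      apply hx
      have : w.head = 1 := Subtype.ext h1
      rw [hx_base, this, map_one]
    obtain ⟨α, hα⟩ : ∃ α, (w.head : G) ∉ Gα α := by
      by_contra hall
      push_neg at hall
      have : (w.head : G) ∈ ⨅ α, Gα α := Subgroup.mem_iInf.2 hall
      rw [htriv] at this
      exact hhead (Subgroup.mem_bot.1 this)
    haveI := hnorm α
    haveI := hfi α
    let q := QuotientGroup.mk' (Gα α)
    let lam : Monoid.PushoutI φ →* G ⧸ Gα α :=
      Monoid.PushoutI.lift (fun b => q.comp (famId G b)) (q.comp H.subtype)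
        (by intro b; cases b <;> rfl)
    have hlx : lam x ≠ 1 := by
      rw [hx_base, Monoid.PushoutI.lift_base]
      intro hq
      exact hα ((QuotientGroup.eq_one_iff _).1 hq)
    haveI : Finite (lam.range) := inferInstance
    exact ⟨lam.ker, MonoidHom.normal_ker lam, Subgroup.finiteIndex_ker lam,
      fun hk => hlx hk⟩
  · -- `x` has a nonempty normal form
    have hkey : ∀ (b : Bool) (g : fam G G b), g ∈ d.set b →
        g ∈ MonoidHom.range (φ b) → g = 1 := by
      intro b g hset hrange
      have hinj := (d.compl b).1
      have hpair : (⟨⟨g, hrange⟩, ⟨(1 : fam G G b), d.one_mem b⟩⟩ :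
            (MonoidHom.range (φ b) : Set (fam G G b)) × (d.set b)) =
          ⟨⟨(1 : fam G G b), Subgroup.one_mem _⟩, ⟨g, hset⟩⟩ := by
        apply hinj
        show g * 1 = 1 * g
        rw [mul_one, one_mul]
      exact (congrArg (fun p => (p.2 : fam G G b)) hpair).symm
    have hlet : ∀ l ∈ (w.toWord).toList, famId G l.1 l.2 ∉ H := by
      rintro ⟨b, g⟩ hl hmem
      have hset : g ∈ d.set b := w.normalized b g hl
      have hne : g ≠ 1 := (w.toWord).ne_one ⟨b, g⟩ hl
      apply hne
      apply hkey b g hset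
      cases b
      · exact ⟨⟨famId G false g, hmem⟩, rfl⟩
      · exact ⟨⟨famId G true g, hmem⟩, rfl⟩
    have hchoice : ∀ l ∈ (w.toWord).toList, ∃ γ, famId G l.1 l.2 ∉ (H ⊔ Gα γ) := by
      intro l hl
      by_contra hall
      push_neg at hall
      exact hlet l hl (by rw [← hfil]; exact Subgroup.mem_iInf.2 hall)
    obtain ⟨l₀, hl₀⟩ : ∃ l, l ∈ (w.toWord).toList := by
      rcases hL : (w.toWord).toList with _ | ⟨a, L⟩
      · exact (hempty hL).elim
      · exact ⟨a, List.mem_cons_self⟩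
    haveI : Nonempty ι := ⟨(hchoice l₀ hl₀).choose⟩
    set αf : (Σ b, fam G G b) → ι := fun l =>
      if h : ∃ γ, famId G l.1 l.2 ∉ (H ⊔ Gα γ) then h.choose
      else Classical.arbitrary ι with hαf
    set T : Finset (Σ b, fam G G b) := (w.toWord).toList.toFinset with hT
    set K : Subgroup G := ⨅ l ∈ T, (H ⊔ Gα (αf l)) with hK
    have hHK : H ≤ K := le_iInf fun l => le_iInf fun _ => le_sup_left
    haveI hKn : K.Normal := by
      constructor
      intro nn hn g
      have hn2 : nn ∈ ⨅ l ∈ T, (H ⊔ Gα (αf l)) := hK ▸ hn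
      have hn' : ∀ l ∈ T, nn ∈ H ⊔ Gα (αf l) := fun l hl =>
        Subgroup.mem_iInf.1 (Subgroup.mem_iInf.1 hn2 l) hl
      rw [hK]
      refine Subgroup.mem_iInf.2 fun l => Subgroup.mem_iInf.2 fun hl => ?_
      haveI := hnorm (αf l)
      exact (Subgroup.sup_normal H (Gα (αf l))).conj_mem _ (hn' l hl) g
    haveI hKfi : K.FiniteIndex := by
      refine Subgroup.finiteIndex_iInf' _ (fun l _ => ?_)
      haveI := hfi (αf l)
      exact Subgroup.finiteIndex_of_le le_sup_right
    let qK := QuotientGroup.mk' K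
    let f : ∀ b : Bool, fam G G b →* G ⧸ K := fun b => qK.comp (famId G b)
    have hcompat : ∀ b, ((Monoid.CoprodI.of (M := fun _ : Bool => G ⧸ K) (i := b)).comp
        (f b)).comp (φ b) = 1 := by
      intro b
      ext h
      have h1 : qK ((h : G)) = 1 := (QuotientGroup.eq_one_iff _).2 (hHK h.2)
      cases b
      · show Monoid.CoprodI.of (M := fun _ : Bool => G ⧸ K) (i := false) (qK ((h : G))) = 1
        rw [h1, map_one]
      · show Monoid.CoprodI.of (M := fun _ : Bool => G ⧸ K) (i := true) (qK ((h : G))) = 1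
        rw [h1, map_one]
    let Psi : Monoid.PushoutI φ →* Monoid.CoprodI (fun _ : Bool => G ⧸ K) :=
      Monoid.PushoutI.lift
        (fun b => (Monoid.CoprodI.of (M := fun _ : Bool => G ⧸ K) (i := b)).comp (f b)) 1 hcompat
    have hsurv : ∀ l ∈ (w.toWord).toList, f l.1 l.2 ≠ 1 := by
      intro l hl h1
      have hKle : K ≤ H ⊔ Gα (αf l) := by
        have hlT : l ∈ T := List.mem_toFinset.2 hl
        rw [hK]
        exact le_trans (iInf_le _ l) (iInf_le _ hlT)
      have hmemK : famId G l.1 l.2 ∈ K := (QuotientGroup.eq_one_iff _).1 h1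
      have hex := hchoice l hl
      have hspec : famId G l.1 l.2 ∉ (H ⊔ Gα (αf l)) := by
        rw [hαf]
        simp only [dif_pos hex]
        exact hex.choose_spec
      exact hspec (hKle hmemK)
    set W' := mapWord f (w.toWord) hsurv with hW'
    have hPsi : Psi x = W'.prod := by
      rw [hxw, hprod, map_mul]
      have h1 : Psi (Monoid.PushoutI.base φ w.head) = 1 := by
        rw [Monoid.PushoutI.lift_base]
        rfl
      have h2 : Psi (Monoid.PushoutI.ofCoprodI (w.toWord).prod) =
          Monoid.CoprodI.lift (fun b =>
            (Monoid.CoprodI.of (M := fun _ : Bool => G ⧸ K) (i := b)).comp (f b)) (w.toWord).prod := by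
        have heq : Psi.comp Monoid.PushoutI.ofCoprodI =
            Monoid.CoprodI.lift (fun b =>
              (Monoid.CoprodI.of (M := fun _ : Bool => G ⧸ K) (i := b)).comp (f b)) := by
          apply Monoid.CoprodI.ext_hom
          intro b
          ext g
          show Psi (Monoid.PushoutI.ofCoprodI (Monoid.CoprodI.of g)) = _
          rw [Monoid.PushoutI.ofCoprodI_of, Monoid.PushoutI.lift_of]
          rfl
        exact DFunLike.congr_fun heq (w.toWord).prod
      rw [h1, h2, one_mul, mapWord_prod]
    have hW'ne : W' ≠ Monoid.CoprodI.Word.empty := by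
      intro h
      have hlen : W'.toList.length = 0 := by rw [h]; rfl
      rw [hW', mapWord_length] at hlen
      exact hempty (List.length_eq_zero_iff.1 hlen)
    haveI : ∀ b : Bool, Finite ((fun _ : Bool => G ⧸ K) b) := fun _ => inferInstance
    let theta := truncTheta (M := fun _ : Bool => G ⧸ K) W'.toList.length
    let chi := theta.comp Psi
    have hchi : chi x ≠ 1 := by
      show theta (Psi x) ≠ 1
      rw [hPsi]
      exact truncTheta_ne_one hW'ne
    haveI : Finite (chi.range) := inferInstance
    exact ⟨chi.ker, MonoidHom.normal_ker chi, Subgroup.finiteIndex_ker chi,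
      fun hk => hchi hk⟩
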